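/- Let m ≥ n and let G = (I_k | A) ∈ F_{q^m}^{k×n} be a generator matrix (in vector representation) of a maximum rank distance code with minimum rank distance δ = n−k+1. Fix integers 0 ≤ λ_0 ≤ λ_1 ≤ ... ≤ λ_{k−1} ≤ m and a basis β of F_{q^m} over F_q. Let U be the set of vectors (u_0,...,u_{k−1}) ∈ F_{q^m}^k such that the coordinate vector of u_i with respect to β is supported in its first λ_i positions. Then C = {Ψ_m(uG) : u ∈ U} is an F_q-linear code of m×n matrices with dimension Σ_{i=0}^{k−1} λ_i in which every nonzero matrix has rank at least δ. -/

import Mathlib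

/-- Expansion `Ψ` of a vector over the extension field `L` into a matrix over `F_q`:
the `j`-th column is the coordinate vector of the `j`-th entry w.r.t. the basis `b`. -/
noncomputable def expand {Fq L : Type*} [Field Fq] [Field L] [Algebra Fq L]
    {m n : ℕ} (b : Module.Basis (Fin m) Fq L) (v : Fin n → L) :
    Matrix (Fin m) (Fin n) Fq :=
  Matrix.of fun i j => b.repr (v j) i

/-- Lemma 3.1 of the paper: if `G = (I_k | A)` generates a systematic
MRD `[m×n, δ]_q` code (`δ = n-k+1`, `m ≥ n`) and `0 ≤ λ₀ ≤ ⋯ ≤ λ_{k-1} ≤ m`,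
then `C = {Ψ_m(uG) : u ∈ U}`, where `U` consists of vectors whose `i`-th
coordinate is supported in the first `λ_i` basis positions, is an `F_q`-linear
code of dimension `Σ λ_i` all of whose nonzero matrices have rank at least `δ`. -/
theorem stmt7 (Fq L : Type*) [Field Fq] [Fintype Fq] [Field L] [Algebra Fq L]
    (m n k : ℕ) (hnm : n ≤ m) (hkn : k ≤ n)
    (b : Module.Basis (Fin m) Fq L)
    (G : Matrix (Fin k) (Fin n) L)
    (hsys : ∀ (i : Fin k) (j : Fin n), (j : ℕ) < k →
      G i j = if (i : ℕ) = (j : ℕ) then 1 else 0)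
    (hMRD : ∀ u : Fin k → L, u ≠ 0 →
      n - k + 1 ≤ (expand b (Matrix.vecMul u G)).rank)
    (lam : Fin k → ℕ) (hmono : Monotone lam) (hlam : ∀ i, lam i ≤ m) :
    ∃ C : Submodule Fq (Matrix (Fin m) (Fin n) Fq),
      (↑C : Set (Matrix (Fin m) (Fin n) Fq)) =
        (fun u => expand b (Matrix.vecMul u G)) ''
          {u : Fin k → L | ∀ (i : Fin k) (j : Fin m),
            lam i ≤ (j : ℕ) → b.repr (u i) j = 0} ∧
      Module.finrank Fq C = ∑ i, lam i ∧
      (∀ M ∈ C, M ≠ 0 → n - k + 1 ≤ M.rank) := by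
  classical
  -- the expansion of `u * G` as an `Fq`-linear map
  let f : (Fin k → L) →ₗ[Fq] Matrix (Fin m) (Fin n) Fq :=
    { toFun := fun u => expand b (Matrix.vecMul u G)
      map_add' := by
        intro u v
        ext i j
        simp [expand, Matrix.vecMul, dotProduct, add_mul, Finset.sum_add_distrib]
      map_smul' := by
        intro c u
        ext i j
        simp only [expand, Matrix.vecMul, dotProduct, Pi.smul_apply, smul_mul_assoc,
          ← Finset.smul_sum, map_smul, Matrix.of_apply, RingHom.id_apply, Matrix.smul_apply,
          Finsupp.coe_smul, Pi.smul_apply, smul_eq_mul] }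
  -- the parametrization of `U` by tuples of coefficient vectors
  let h : (∀ i : Fin k, Fin (lam i) → Fq) →ₗ[Fq] (Fin k → L) :=
    { toFun := fun c i => ∑ j : Fin (lam i), c i j • b (Fin.castLE (hlam i) j)
      map_add' := by
        intro x y; funext i; simp [add_smul, Finset.sum_add_distrib]
      map_smul' := by
        intro a x; funext i; simp [smul_smul, Finset.smul_sum] }
  -- coordinates of `h c`
  have hrepr : ∀ (c : ∀ i : Fin k, Fin (lam i) → Fq) (i : Fin k) (j : Fin m),
      b.repr (h c i) j = if hj : (j : ℕ) < lam i then c i ⟨(j : ℕ), hj⟩ else 0 := by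
    intro c i j
    have : h c i = ∑ j' : Fin (lam i), c i j' • b (Fin.castLE (hlam i) j') := rfl
    rw [this, map_sum]
    simp only [map_smul, Module.Basis.repr_self, Finsupp.smul_single, smul_eq_mul, mul_one,
      Finsupp.coe_finset_sum, Finset.sum_apply, Finsupp.single_apply]
    by_cases hj : (j : ℕ) < lam i
    · rw [dif_pos hj]
      rw [Finset.sum_eq_single (⟨(j : ℕ), hj⟩ : Fin (lam i))]
      · rw [if_pos]; ext; simp
      · intro j' _ hne
        rw [if_neg]
        intro hc
        apply hne
        apply Fin.ext
        have := congrArg (Fin.val) hc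
        simpa using this
      · intro habs; exact absurd (Finset.mem_univ _) habs
    · rw [dif_neg hj]
      apply Finset.sum_eq_zero
      intro j' _
      rw [if_neg]
      intro hc
      apply hj
      have := congrArg (Fin.val) hc
      simp at this
      omega
  -- range of `h` is exactly the set `U`
  have hrange : Set.range h =
      {u : Fin k → L | ∀ (i : Fin k) (j : Fin m), lam i ≤ (j : ℕ) → b.repr (u i) j = 0} := by
    ext u
    constructor
    · rintro ⟨c, rfl⟩ i j hj
      rw [hrepr c i j, dif_neg (by omega)]
    · intro hu
      refine ⟨fun i j => b.repr (u i) (Fin.castLE (hlam i) j), ?_⟩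
      funext i
      apply b.repr.injective
      ext j
      rw [hrepr, ]
      by_cases hj : (j : ℕ) < lam i
      · rw [dif_pos hj]
        congr 1
      · rw [dif_neg hj]
        exact (hu i j (by omega)).symm
  -- `u * G = 0` implies `u = 0` by systematicity
  have hG0 : ∀ u : Fin k → L, Matrix.vecMul u G = 0 → u = 0 := by
    intro u hu
    funext i
    have hik : (i : ℕ) < n := lt_of_lt_of_le i.isLt hkn
    have := congrFun hu (Fin.castLE hkn i)
    have hcalc : Matrix.vecMul u G (Fin.castLE hkn i) = u i := by
      simp only [Matrix.vecMul, dotProduct]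
      rw [Finset.sum_eq_single i]
      · rw [hsys i _ (by simp), if_pos (by simp), mul_one]
      · intro i' _ hne
        rw [hsys i' _ (by simp), if_neg (by simpa using fun hc => hne (Fin.ext hc)), mul_zero]
      · intro habs; exact absurd (Finset.mem_univ _) habs
    rw [hcalc] at this
    exact this
  -- `f` is injective
  have hfinj : Function.Injective f := by
    rw [injective_iff_map_eq_zero]
    intro u hu
    apply hG0
    funext j
    apply b.repr.injective
    ext i
    have := congrFun (congrFun hu i) j
    simpa [f, expand] using this
  -- `h` is injective
  have hhinj : Function.Injective h := by
    rw [injective_iff_map_eq_zero]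
    intro c hc
    funext i j
    show c i j = 0
    have h1 := hrepr c i (Fin.castLE (hlam i) j)
    rw [congrFun hc i] at h1
    simp only [map_zero, Finsupp.coe_zero, Pi.zero_apply] at h1
    rw [dif_pos (show ((Fin.castLE (hlam i) j : Fin m) : ℕ) < lam i from j.isLt)] at h1
    exact h1.symm
  refine ⟨LinearMap.range (f ∘ₗ h), ?_, ?_, ?_⟩
  · rw [LinearMap.range_comp, Submodule.map_coe, LinearMap.coe_range, ← hrange]
    rfl
  · have hinj : Function.Injective (⇑(f ∘ₗ h)) := by
      rw [LinearMap.coe_comp]; exact hfinj.comp hhinj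
    rw [LinearMap.finrank_range_of_inj hinj]
    rw [Module.finrank_pi_fintype]
    congr 1
    funext i
    simp [Module.finrank_pi]
  · rintro M ⟨c, rfl⟩ hM
    have hne : h c ≠ 0 := by
      intro h0
      apply hM
      show f (h c) = 0
      rw [h0, map_zero]
    exact hMRD (h c) hne
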